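/- A ring R is a right Σ-V ring if and only if R is a right V-ring and R is q.f.d. relative to every simple right R-module. -/

import Mathlib

universe u

open MulOpposite

/-- A right `A`-module `M` is Σ-injective if the direct sum of any family of copies of `M`
is injective. -/
def IsSigmaInjective (A : Type u) [Ring A] (M : Type u) [AddCommGroup M] [Module A M] : Prop :=
  ∀ ι : Type u, Module.Injective A (ι →₀ M)

/-- `R` is a right Σ-V ring: every simple right `R`-module is Σ-injective.
Right `R`-modules are modules over `Rᵐᵒᵖ`. -/
def IsRightSigmaVRing (R : Type u) [Ring R] : Prop :=
  ∀ (S : Type u) [AddCommGroup S] [Module Rᵐᵒᵖ S],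
    IsSimpleModule Rᵐᵒᵖ S → IsSigmaInjective Rᵐᵒᵖ S

/-- `R` is a right V-ring: every simple right `R`-module is injective. -/
def IsRightVRing (R : Type u) [Ring R] : Prop :=
  ∀ (S : Type u) [AddCommGroup S] [Module Rᵐᵒᵖ S],
    IsSimpleModule Rᵐᵒᵖ S → Module.Injective Rᵐᵒᵖ S

/-- `A` is q.f.d. relative to `M`: no cyclic `A`-module contains an infinite direct sum
(i.e., an infinite independent family) of nonzero submodules each isomorphic to a
submodule of `M`. -/
def QfdRelativeTo (A : Type u) [Ring A] (M : Type u) [AddCommGroup M] [Module A M] : Prop :=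
  ∀ (C : Type u) [AddCommGroup C] [Module A C], (⊤ : Submodule A C).IsPrincipal →
    ∀ N : ℕ → Submodule A C, iSupIndep N → (∀ i, N i ≠ ⊥) →
      (∀ i, ∃ K : Submodule A M, Nonempty ((N i) ≃ₗ[A] K)) → False


section Aux

variable {A : Type u} [Ring A]

theorem moduleInjective_of_equiv {M N : Type u} [AddCommGroup M] [AddCommGroup N]
    [Module A M] [Module A N] (e : M ≃ₗ[A] N) (h : Module.Injective A M) :
    Module.Injective A N where
  out X Y _ _ _ _ f hf g := by
    obtain ⟨h', hh⟩ := h.out f hf (e.symm.toLinearMap ∘ₗ g)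
    exact ⟨e.toLinearMap ∘ₗ h', fun x => by simpa using congrArg e (hh x)⟩

theorem simple_gen {S : Type u} [AddCommGroup S] [Module A S] (hS : IsSimpleModule A S)
    {s : S} (hs : s ≠ 0) (t : S) : ∃ a : A, a • s = t := by
  have h1 : Submodule.span A {s} ≠ ⊥ := by
    simpa [Submodule.span_singleton_eq_bot] using hs
  have h2 : Submodule.span A {s} = ⊤ := (eq_bot_or_eq_top _).resolve_left h1
  exact Submodule.mem_span_singleton.mp (h2 ▸ Submodule.mem_top)

set_option maxHeartbeats 1000000 in
set_option synthInstance.maxHeartbeats 200000 in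
theorem sigma_of_qfd {S : Type u} [AddCommGroup S] [Module A S] (hS : IsSimpleModule A S)
    (hinj : Module.Injective A S) (hq : QfdRelativeTo A S) : IsSigmaInjective A S := by
  classical
  intro ι
  apply Module.Baer.injective
  intro I f
  set T : Set ι := {j | (Finsupp.lapply j : (ι →₀ S) →ₗ[A] S) ∘ₗ f ≠ 0} with hTdef
  by_cases hTf : T.Finite
  · -- finitely many nonzero coordinate maps: extend each separately
    have ext : ∀ j : ι, ∃ F : A →ₗ[A] S, ∀ x : I,
        F (I.subtype x) = ((Finsupp.lapply j : (ι →₀ S) →ₗ[A] S) ∘ₗ f) x :=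
      fun j => hinj.out I.subtype Subtype.val_injective _
    choose F hF using ext
    refine ⟨∑ j ∈ hTf.toFinset, (Finsupp.lsingle j) ∘ₗ F j, fun x mem => ?_⟩
    have hs : ∀ y : A, (∑ j ∈ hTf.toFinset, (Finsupp.lsingle j : S →ₗ[A] ι →₀ S) ∘ₗ F j) y
        = ∑ j ∈ hTf.toFinset, Finsupp.single j (F j y) := by
      intro y; simp [LinearMap.sum_apply]
    rw [hs]
    ext k
    rw [Finsupp.finset_sum_apply]
    simp only [Finsupp.single_apply]
    rw [Finset.sum_ite_eq' hTf.toFinset k (fun j => F j x)]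
    by_cases hk : k ∈ T
    · rw [if_pos (hTf.mem_toFinset.mpr hk)]
      exact hF k ⟨x, mem⟩
    · rw [if_neg (by simpa using hk)]
      have h0 : (Finsupp.lapply k : (ι →₀ S) →ₗ[A] S) ∘ₗ f = 0 := not_not.mp hk
      have := congrFun (congrArg DFunLike.coe h0) ⟨x, mem⟩
      simpa using this.symm
  · -- infinitely many nonzero coordinate maps: contradiction with qfd
    exfalso
    have hT' : T.Infinite := hTf
    have hχ' : ∀ j : ι, ∃ y : I, j ∈ T → f y j ≠ 0 := by
      intro j
      by_cases hj : j ∈ T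
      · have hex : ∃ y : I, f y j ≠ 0 := by
          by_contra hcon
          push_neg at hcon
          exact hj (LinearMap.ext fun y => by simpa using hcon y)
        obtain ⟨y, hy⟩ := hex
        exact ⟨y, fun _ => hy⟩
      · exact ⟨0, fun h => absurd h hj⟩
    choose χ hχ using hχ'
    have hstep : ∀ Fs : Finset ι, ∃ j, j ∈ T ∧ ∀ m ∈ Fs, f (χ m) j = 0 := by
      intro Fs
      have hfin : (⋃ m ∈ (Fs : Set ι), ((f (χ m)).support : Set ι)).Finite :=
        Set.Finite.biUnion Fs.finite_toSet (fun m _ => (f (χ m)).support.finite_toSet)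
      obtain ⟨j, hj⟩ := (hT'.diff hfin).nonempty
      refine ⟨j, hj.1, fun m hm => ?_⟩
      exact Finsupp.notMem_support_iff.mp (fun hc => hj.2 (Set.mem_biUnion hm hc))
    choose step hstepT hstep0 using hstep
    -- the strictly growing index sequence
    let Jset : ℕ → Finset ι := fun k => Nat.rec ∅ (fun _ Fs => insert (step Fs) Fs) k
    have hJle : ∀ {m k : ℕ}, m ≤ k → Jset m ⊆ Jset k := by
      intro m k h
      induction h with
      | refl => exact Finset.Subset.refl _
      | step _ ih => exact ih.trans (Finset.subset_insert _ _)
    let jf : ℕ → ι := fun k => step (Jset k)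
    have hjmem : ∀ m k : ℕ, m < k → jf m ∈ Jset k :=
      fun m k h => hJle h (Finset.mem_insert_self _ _)
    have hjT : ∀ k, jf k ∈ T := fun k => hstepT _
    -- the coordinate maps and triangular sequence
    let g : ℕ → (I →ₗ[A] S) := fun k => (Finsupp.lapply (jf k)) ∘ₗ f
    let xs : ℕ → I := fun m => χ (jf m)
    have htri : ∀ m k, m < k → g k (xs m) = 0 :=
      fun m k h => hstep0 (Jset k) (jf m) (hjmem m k h)
    have hdiag : ∀ m, g m (xs m) ≠ 0 := fun m => hχ (jf m) (hjT m)
    -- extend each coordinate map to A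
    have ext : ∀ k, ∃ G : A →ₗ[A] S, ∀ x : I, G (I.subtype x) = g k x :=
      fun k => hinj.out I.subtype Subtype.val_injective (g k)
    choose G hG using ext
    let H : A →ₗ[A] (ℕ → S) := LinearMap.pi G
    have hHI : ∀ (x : I) (k : ℕ), H (x : A) k = g k x := by
      intro x k
      simpa [H] using hG k x
    -- the triangular system is solvable
    have claim : ∀ l : ℕ, ∀ w : ℕ → S, (∀ k, l ≤ k → w k = 0) →
        ∃ x : I, ∀ k, g k x = w k := by
      intro l
      induction l with
      | zero => exact fun w hw => ⟨0, fun k => by rw [map_zero, hw k (Nat.zero_le k)]⟩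
      | succ l ih =>
        intro w hw
        obtain ⟨a, ha⟩ := simple_gen hS (hdiag l) (w l)
        have hw' : ∀ k, l ≤ k → (w - fun k => g k (a • xs l)) k = 0 := by
          intro k hk
          rcases eq_or_lt_of_le hk with h | h
          · show w k - g k (a • xs l) = 0
            rw [map_smul, ← h, ha, sub_self]
          · show w k - g k (a • xs l) = 0
            rw [map_smul, htri l k h, smul_zero, hw k h, sub_self]
        obtain ⟨x', hx'⟩ := ih _ hw'
        refine ⟨a • xs l + x', fun k => ?_⟩
        rw [map_add, hx' k]
        show g k (a • xs l) + (w k - g k (a • xs l)) = w k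
        abel
    have hSnt : ∃ s : S, s ≠ 0 := by
      have : Nontrivial S := IsSimpleModule.nontrivial A S
      exact exists_ne 0
    -- the cyclic module and the independent family
    let σ : LinearMap.range H →ₗ[A] (ℕ → S) := (LinearMap.range H).subtype
    let P : ℕ → Submodule A (ℕ → S) := fun i =>
      ⨅ (k : ℕ) (_ : k ≠ i), LinearMap.ker (LinearMap.proj (R := A) (φ := fun _ : ℕ => S) k)
    have hPmem : ∀ (i : ℕ) (v : ℕ → S), v ∈ P i ↔ ∀ k, k ≠ i → v k = 0 := by
      intro i v
      simp [P, Submodule.mem_iInf]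
    have hPind : iSupIndep P := by
      intro i
      have hsup : (⨆ (j) (_ : j ≠ i), P j) ≤
          LinearMap.ker (LinearMap.proj (R := A) (φ := fun _ : ℕ => S) i) := by
        refine iSup_le fun j => iSup_le fun hj v hv => ?_
        exact (hPmem j v).mp hv i (Ne.symm hj)
      rw [disjoint_iff, eq_bot_iff]
      rintro v ⟨h1, h2⟩
      have hvi : v i = 0 := hsup h2
      have : v = 0 := funext fun k => by
        by_cases hk : k = i
        · rw [hk]; exact hvi
        · exact (hPmem i v).mp h1 k hk
      simp [this]
    have hNind : iSupIndep (fun i => (P i).comap σ) := by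
      intro i
      rw [disjoint_iff, eq_bot_iff]
      rintro v ⟨h1, h2⟩
      have h2' : σ v ∈ ⨆ (j) (_ : j ≠ i), P j := by
        have hle : (⨆ (j) (_ : j ≠ i), (P j).comap σ) ≤
            ((⨆ (j) (_ : j ≠ i), P j)).comap σ :=
          iSup_le fun j => iSup_le fun hj => Submodule.comap_mono (le_iSup₂ (f := fun j (_ : j ≠ i) => P j) j hj)
        exact hle h2
      have hmem : σ v ∈ P i ⊓ ⨆ (j) (_ : j ≠ i), P j := ⟨h1, h2'⟩
      rw [disjoint_iff.mp (hPind i)] at hmem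
      have : σ v = 0 := hmem
      have hv0 : v = 0 := Subtype.ext this
      simp [hv0]
    -- apply qfd
    refine hq (LinearMap.range H) ⟨⟨⟨H 1, ⟨1, rfl⟩⟩, ?_⟩⟩ (fun i => (P i).comap σ)
      hNind ?_ ?_
    · -- cyclic
      refine le_antisymm ?_ le_top
      rintro ⟨v, a, rfl⟩ -
      refine Submodule.mem_span_singleton.mpr ⟨a, Subtype.ext ?_⟩
      show a • H 1 = H a
      rw [← map_smul, smul_eq_mul, mul_one]
    · -- nonzero
      intro i
      obtain ⟨s, hs⟩ := hSnt
      obtain ⟨x, hx⟩ := claim (i + 1) (Pi.single i s)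
        (fun k hk => by rw [Pi.single_apply, if_neg (by omega)])
      rw [Submodule.ne_bot_iff]
      refine ⟨⟨H (x : A), ⟨(x : A), rfl⟩⟩, ?_, ?_⟩
      · show H (x : A) ∈ P i
        refine (hPmem i _).mpr fun k hk => ?_
        rw [hHI x k, hx k, Pi.single_apply, if_neg hk]
      · intro hz
        have h0 : H (x : A) = 0 := congrArg Subtype.val hz
        have : g i x = 0 := by rw [← hHI x i, h0]; rfl
        rw [hx i, Pi.single_apply, if_pos rfl] at this
        exact hs this
    · -- each is isomorphic to a submodule of S
      intro i
      let θ : ((P i).comap σ) →ₗ[A] S :=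
        (LinearMap.proj (R := A) (φ := fun _ : ℕ => S) i) ∘ₗ (σ ∘ₗ ((P i).comap σ).subtype)
      have hker : LinearMap.ker θ = ⊥ := by
        rw [eq_bot_iff]
        intro v hv
        have hvP : σ (((P i).comap σ).subtype v) ∈ P i := v.2
        have hvi : σ (((P i).comap σ).subtype v) i = 0 := hv
        have hvz : σ (((P i).comap σ).subtype v) = 0 := funext fun k => by
          by_cases hk : k = i
          · rw [hk]; exact hvi
          · exact (hPmem i _).mp hvP k hk
        have : ((P i).comap σ).subtype v = 0 := Subtype.ext hvz
        have hv0 : v = 0 := Subtype.ext this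
        simp [hv0]
      have hθ : Function.Injective θ := fun a b hab => sub_eq_zero.mp
        (LinearMap.ker_eq_bot'.mp hker (a - b) (by
          change a.1.1 i = b.1.1 i at hab
          change (a.1.1 - b.1.1) i = 0
          rw [Pi.sub_apply, hab, sub_self]))
      exact ⟨LinearMap.range θ, ⟨LinearEquiv.ofInjective θ hθ⟩⟩

theorem qfd_of_sigma {S : Type u} [AddCommGroup S] [Module A S] (hS : IsSimpleModule A S)
    (h : IsSigmaInjective A S) : QfdRelativeTo A S := by
  intro C _ _ hC N hind hne hiso
  have φne : ∀ i, Nonempty ((N i) ≃ₗ[A] S) := by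
    intro i
    obtain ⟨K, ⟨e⟩⟩ := hiso i
    have hK : K ≠ ⊥ := by
      rintro rfl
      have : Subsingleton (N i) := e.toEquiv.subsingleton
      exact hne i (Submodule.subsingleton_iff_eq_bot.mp this)
    have hKtop : K = ⊤ := (eq_bot_or_eq_top K).resolve_left hK
    subst hKtop
    exact ⟨e.trans (Submodule.topEquiv)⟩
  have φ : ∀ i, (N i) ≃ₗ[A] S := fun i => (φne i).some
  -- the inclusion of the direct sum, injective by independence
  set Φ : (Π₀ i : ℕ, N i) →ₗ[A] C := DFinsupp.lsum ℕ (fun i => (N i).subtype) with hΦ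
  have hΦinj : Function.Injective Φ := hind.dfinsupp_lsum_injective
  set ψ : (Π₀ i : ℕ, N i) →ₗ[A] (ULift.{u} ℕ →₀ S) :=
    DFinsupp.lsum ℕ (fun i => (Finsupp.lsingle (ULift.up i)) ∘ₗ (φ i).toLinearMap) with hψ
  obtain ⟨g, hg⟩ := (h (ULift.{u} ℕ)).out Φ hΦinj ψ
  obtain ⟨c, hc⟩ := hC
  obtain ⟨i, hi⟩ := (g c).support.exists_notMem
  -- every value of g has zero i-th coordinate
  have hzero : ∀ x : C, g x i = 0 := by
    intro x
    have hx : x ∈ Submodule.span A {c} := hc ▸ Submodule.mem_top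
    obtain ⟨a, rfl⟩ := Submodule.mem_span_singleton.mp hx
    rw [map_smul, Finsupp.smul_apply, Finsupp.notMem_support_iff.mp hi, smul_zero]
  obtain ⟨x, hxN, hx0⟩ := Submodule.ne_bot_iff (N i.down) |>.mp (hne i.down)
  have key : g (Φ (DFinsupp.single i.down ⟨x, hxN⟩))
      = Finsupp.single i (φ i.down ⟨x, hxN⟩) := by
    rw [hg]
    simp [hψ]
  have : (0 : S) = φ i.down ⟨x, hxN⟩ := by
    have := hzero (Φ (DFinsupp.single i.down ⟨x, hxN⟩))
    rw [key, Finsupp.single_eq_same] at this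
    exact this.symm
  exact hx0 (by simpa using congrArg Subtype.val ((φ i.down).map_eq_zero_iff.mp this.symm))

end Aux

/-- A ring `R` is a right Σ-V ring if and only if `R` is a right V-ring and `R` is
q.f.d. relative to every simple right `R`-module. -/
theorem rightSigmaV_iff_rightV_and_qfd (R : Type u) [Ring R] :
    IsRightSigmaVRing R ↔
      (IsRightVRing R ∧
        ∀ (S : Type u) [AddCommGroup S] [Module Rᵐᵒᵖ S],
          IsSimpleModule Rᵐᵒᵖ S → QfdRelativeTo Rᵐᵒᵖ S) := by
  constructor
  · intro h
    refine ⟨fun S _ _ hS => ?_, fun S _ _ hS => qfd_of_sigma hS (h S hS)⟩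
    exact moduleInjective_of_equiv
      (Finsupp.LinearEquiv.finsuppUnique Rᵐᵒᵖ S PUnit.{u+1}) (h S hS PUnit.{u+1})
  · rintro ⟨hV, hq⟩ S _ _ hS
    exact sigma_of_qfd hS (hV S hS) (hq S hS)
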